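/- The equivalence relations ~ and ≅ on the set 𝓑 = {(b, m) : m ≥ 2, b ∈ B_m} coincide; that is, the equivalence relation generated by conjugation together with the right-stabilization moves (b, m) ∼ (σ_m·b, m+1) and (b, m) ∼ (σ_m^{−1}·b, m+1) equals the equivalence relation generated by conjugation together with the left-stabilization moves (b, m) ≅ (σ_1·sh_m(b), m+1) and (b, m) ≅ (σ_1^{−1}·sh_m(b), m+1). -/

import Mathlib

/-- Relators of a braid group on generators indexed by `Fin m`;
the generator of index `i` represents `σ_{i+1}` (0-indexed). -/
def braidRels (m : ℕ) : Set (FreeGroup (Fin m)) :=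
  {r | (∃ i j : Fin m, (i : ℕ) + 2 ≤ (j : ℕ) ∧
          r = FreeGroup.of i * FreeGroup.of j * (FreeGroup.of i)⁻¹ * (FreeGroup.of j)⁻¹) ∨
       (∃ i j : Fin m, (j : ℕ) = (i : ℕ) + 1 ∧
          r = FreeGroup.of i * FreeGroup.of j * FreeGroup.of i *
              (FreeGroup.of j)⁻¹ * (FreeGroup.of i)⁻¹ * (FreeGroup.of j)⁻¹)}

/-- The braid group `B_n`, presented with generators `σ_1, …, σ_{n-1}`. -/
def BraidGroup (n : ℕ) : Type := PresentedGroup (braidRels (n - 1))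

instance (n : ℕ) : Group (BraidGroup n) := by unfold BraidGroup; infer_instance

/-- `bσ k` is the generator `σ_{k+1}` of `B_n` (0-indexed, so `bσ 0 = σ_1`). -/
def bσ {n : ℕ} (k : Fin (n - 1)) : BraidGroup n := PresentedGroup.of k

/-- The set `𝓑` of pairs `(b, m)` with `m ≥ 2` and `b ∈ B_m`, encoded as
`⟨k, b⟩` with `b ∈ B_{k+2}`. -/
def BB : Type := (k : ℕ) × BraidGroup (k + 2)

/-- The generating moves of the Markov equivalence `~`: conjugation, and the
right-stabilizations `(b, m) ~ (σ_m^{±1} · i_m b, m+1)`.  Here `ι k` is the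
inclusion `B_{k+2} → B_{k+3}`, and `σ_m` (with `m = k+2`) is the 0-indexed
generator of index `m - 1 = k + 1` of `B_{k+3}`. -/
def markovMove (ι : ∀ k : ℕ, BraidGroup (k + 2) →* BraidGroup (k + 3)) :
    BB → BB → Prop := fun x y =>
  (∃ a : BraidGroup (x.1 + 2), y = ⟨x.1, a * x.2 * a⁻¹⟩) ∨
  y = ⟨x.1 + 1, bσ (⟨x.1 + 1, by omega⟩ : Fin (x.1 + 3 - 1)) * ι x.1 x.2⟩ ∨
  y = ⟨x.1 + 1, (bσ (⟨x.1 + 1, by omega⟩ : Fin (x.1 + 3 - 1)))⁻¹ * ι x.1 x.2⟩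

/-- The generating moves of the relation `≅`: conjugation, and the
left-stabilizations `(b, m) ≅ (σ_1^{±1} · sh_m b, m+1)`.  Here `sh k` is the
shift `B_{k+2} → B_{k+3}` with `σ_j ↦ σ_{j+1}`, and `σ_1` is the 0-indexed
generator of index `0`. -/
def mirrorMove (sh : ∀ k : ℕ, BraidGroup (k + 2) →* BraidGroup (k + 3)) :
    BB → BB → Prop := fun x y =>
  (∃ a : BraidGroup (x.1 + 2), y = ⟨x.1, a * x.2 * a⁻¹⟩) ∨
  y = ⟨x.1 + 1, bσ (⟨0, by omega⟩ : Fin (x.1 + 3 - 1)) * sh x.1 x.2⟩ ∨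
  y = ⟨x.1 + 1, (bσ (⟨0, by omega⟩ : Fin (x.1 + 3 - 1)))⁻¹ * sh x.1 x.2⟩

namespace Aux

theorem braidRel_mk_one {m : ℕ} {r : FreeGroup (Fin m)} (hr : r ∈ braidRels m) :
    PresentedGroup.mk (braidRels m) r = 1 :=
  (QuotientGroup.eq_one_iff r).mpr (Subgroup.subset_normalClosure hr)

theorem bσ_comm {n : ℕ} (i j : Fin (n - 1)) (h : (i : ℕ) + 2 ≤ (j : ℕ)) :
    bσ (n := n) i * bσ j = bσ j * bσ i := by
  have h1 := braidRel_mk_one (Or.inl ⟨i, j, h, rfl⟩)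
  simp only [map_mul, map_inv] at h1
  rw [mul_inv_eq_one, mul_inv_eq_iff_eq_mul] at h1
  exact h1

theorem bσ_braid {n : ℕ} (i j : Fin (n - 1)) (h : (j : ℕ) = (i : ℕ) + 1) :
    bσ (n := n) i * bσ j * bσ i = bσ j * bσ i * bσ j := by
  have h1 := braidRel_mk_one (Or.inr ⟨i, j, h, rfl⟩)
  simp only [map_mul, map_inv] at h1
  rw [mul_inv_eq_one, mul_inv_eq_iff_eq_mul, mul_inv_eq_iff_eq_mul] at h1
  exact h1

theorem braidHom_ext {n : ℕ} {G : Type*} [Group G] {φ ψ : BraidGroup n →* G}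
    (h : ∀ j : Fin (n - 1), φ (bσ j) = ψ (bσ j)) : φ = ψ :=
  PresentedGroup.ext h


/-- Out-of-range-safe generator. -/
def ss (n : ℕ) (i : ℕ) : BraidGroup n := if h : i < n - 1 then bσ ⟨i, h⟩ else 1

theorem ss_comm {n : ℕ} {i j : ℕ} (h : i + 2 ≤ j) : ss n i * ss n j = ss n j * ss n i := by
  unfold ss
  split_ifs with h1 h2 h2
  · exact bσ_comm _ _ h
  · simp
  · simp
  · simp

theorem ss_braid {n : ℕ} {i : ℕ} (h : i + 1 < n - 1) :
    ss n i * ss n (i + 1) * ss n i = ss n (i + 1) * ss n i * ss n (i + 1) := by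
  unfold ss
  rw [dif_pos (show i < n - 1 by omega), dif_pos h]
  exact bσ_braid _ _ rfl

def PP (n t : ℕ) : BraidGroup n := ((List.range t).map (ss n)).prod

def QQ (n t : ℕ) : BraidGroup n := ((List.range t).map (fun i => ss n (i + 1))).prod

theorem PP_succ (n t : ℕ) : PP n (t + 1) = PP n t * ss n t := by
  simp [PP, List.range_succ]

theorem QQ_succ (n t : ℕ) : QQ n (t + 1) = QQ n t * ss n (t + 1) := by
  simp [QQ, List.range_succ]

theorem PP_comm {n : ℕ} {j : ℕ} : ∀ t, t + 1 ≤ j → PP n t * ss n j = ss n j * PP n t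
  | 0, _ => by simp [PP]
  | (t + 1), h => by
    rw [PP_succ, mul_assoc, ss_comm (by omega : t + 2 ≤ j), ← mul_assoc,
      PP_comm t (by omega), mul_assoc]

theorem PP_cycle {n : ℕ} {j : ℕ} : ∀ t, t ≤ n - 1 → j + 2 ≤ t →
    PP n t * ss n j = ss n (j + 1) * PP n t
  | 0, _, h => by omega
  | (t + 1), ht, h => by
    rcases Nat.lt_or_ge (j + 2) (t + 1) with h' | h'
    · rw [PP_succ, mul_assoc, ← ss_comm (show j + 2 ≤ t by omega), ← mul_assoc,
        PP_cycle t (by omega) (by omega), mul_assoc]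
    · have htj : t = j + 1 := by omega
      subst htj
      have hb : j + 1 < n - 1 := by omega
      calc PP n (j + 2) * ss n j
          = PP n j * (ss n j * ss n (j + 1) * ss n j) := by
            rw [PP_succ, PP_succ]; simp [mul_assoc]
        _ = PP n j * (ss n (j + 1) * ss n j * ss n (j + 1)) := by rw [ss_braid hb]
        _ = ss n (j + 1) * (PP n j * (ss n j * ss n (j + 1))) := by
            rw [show PP n j * (ss n (j+1) * ss n j * ss n (j+1))
                = PP n j * ss n (j+1) * (ss n j * ss n (j+1)) by simp [mul_assoc],
              PP_comm j (by omega)]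
            simp [mul_assoc]
        _ = ss n (j + 1) * PP n (j + 2) := by rw [PP_succ, PP_succ]; simp [mul_assoc]

theorem delta_shift {n : ℕ} : ∀ t, t + 1 ≤ n - 1 →
    PP n (n - 1) * PP n t = QQ n t * PP n (n - 1)
  | 0, _ => by simp [PP, QQ]
  | (t + 1), h => by
    rw [PP_succ, ← mul_assoc, delta_shift t (by omega), mul_assoc,
      PP_cycle (n - 1) le_rfl (by omega), QQ_succ, ← mul_assoc]

theorem PP_head {n : ℕ} (t : ℕ) : PP n (t + 1) = ss n 0 * QQ n t := by
  simp [PP, QQ, List.range_succ_eq_map, List.map_map, Function.comp_def]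


section Level

variable (ι sh : ∀ k : ℕ, BraidGroup (k + 2) →* BraidGroup (k + 3))
variable (hι : ∀ (k : ℕ) (j : Fin (k + 1)),
      ι k (bσ j) = bσ (Fin.castLE (Nat.le_of_lt_succ (by omega)) j : Fin (k + 3 - 1)))
variable (hsh : ∀ (k : ℕ) (j : Fin (k + 1)),
      sh k (bσ j) = bσ (j.succ : Fin (k + 3 - 1)))

include hι in
theorem ι_ss (k i : ℕ) (h : i ≤ k) : ι k (ss (k + 2) i) = ss (k + 3) i := by
  have h1 : i < k + 2 - 1 := by omega
  have h2 : i < k + 3 - 1 := by omega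
  simp only [ss, dif_pos h1, dif_pos h2]
  rw [hι k ⟨i, by omega⟩]
  rfl

include hsh in
theorem sh_ss (k i : ℕ) (h : i ≤ k) : sh k (ss (k + 2) i) = ss (k + 3) (i + 1) := by
  have h1 : i < k + 2 - 1 := by omega
  have h2 : i + 1 < k + 3 - 1 := by omega
  simp only [ss, dif_pos h1, dif_pos h2]
  rw [hsh k ⟨i, by omega⟩]
  rfl

include hι in
theorem ι_PP (k : ℕ) : ι k (PP (k + 2) (k + 1)) = PP (k + 3) (k + 1) := by
  unfold PP
  rw [map_list_prod, List.map_map]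
  congr 1
  refine List.map_congr_left fun i hi => ?_
  exact ι_ss ι hι k i (by have := List.mem_range.mp hi; omega)

include hsh in
theorem sh_PP (k : ℕ) : sh k (PP (k + 2) (k + 1)) = QQ (k + 3) (k + 1) := by
  unfold PP QQ
  rw [map_list_prod, List.map_map]
  congr 1
  refine List.map_congr_left fun i hi => ?_
  exact sh_ss sh hsh k i (by have := List.mem_range.mp hi; omega)

end Level


theorem ss_of {n : ℕ} (j : Fin (n - 1)) : ss n (j : ℕ) = bσ j := by
  simp [ss, j.isLt]

/-- `g = u·δ` in `B_{k+3}`. -/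
def gg (k : ℕ) : BraidGroup (k + 3) := QQ (k + 3) (k + 1) * PP (k + 3) (k + 2)

/-- `δ_m = σ_1⋯σ_{m-1}` in `B_{k+2}`. -/
def Dk (k : ℕ) : BraidGroup (k + 2) := PP (k + 2) (k + 1)

theorem gg_s (k : ℕ) : gg k * ss (k + 3) (k + 1) = ss (k + 3) 0 * gg k := by
  have h1 : PP (k + 3) (k + 2) * PP (k + 3) (k + 1)
      = QQ (k + 3) (k + 1) * PP (k + 3) (k + 2) := delta_shift (k + 1) (by omega)
  have h2 : PP (k + 3) (k + 2) = PP (k + 3) (k + 1) * ss (k + 3) (k + 1) := PP_succ _ _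
  have h3 : PP (k + 3) (k + 2) = ss (k + 3) 0 * QQ (k + 3) (k + 1) := PP_head _
  have e1 : PP (k + 3) (k + 2) * PP (k + 3) (k + 2)
      = QQ (k + 3) (k + 1) * PP (k + 3) (k + 2) * ss (k + 3) (k + 1) := by
    nth_rewrite 2 [h2]
    rw [← mul_assoc, h1]
  have e2 : PP (k + 3) (k + 2) * PP (k + 3) (k + 2)
      = ss (k + 3) 0 * (QQ (k + 3) (k + 1) * PP (k + 3) (k + 2)) := by
    nth_rewrite 1 [h3]
    rw [mul_assoc]
  unfold gg
  rw [← e1, e2]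

theorem gg_conj_ss (k j : ℕ) (h : j ≤ k) :
    gg k * ss (k + 3) j * (gg k)⁻¹
      = QQ (k + 3) (k + 1) * ss (k + 3) (j + 1) * (QQ (k + 3) (k + 1))⁻¹ := by
  have hc : PP (k + 3) (k + 2) * ss (k + 3) j = ss (k + 3) (j + 1) * PP (k + 3) (k + 2) :=
    PP_cycle (k + 2) (by omega) (by omega)
  unfold gg
  rw [mul_inv_rev, mul_assoc (QQ (k + 3) (k + 1)), hc, ← mul_assoc, ← mul_assoc,
    mul_assoc _ (PP (k + 3) (k + 2))]
  simp [mul_assoc]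

section Level2

variable (ι sh : ∀ k : ℕ, BraidGroup (k + 2) →* BraidGroup (k + 3))
variable (hι : ∀ (k : ℕ) (j : Fin (k + 1)),
      ι k (bσ j) = bσ (Fin.castLE (Nat.le_of_lt_succ (by omega)) j : Fin (k + 3 - 1)))
variable (hsh : ∀ (k : ℕ) (j : Fin (k + 1)),
      sh k (bσ j) = bσ (j.succ : Fin (k + 3 - 1)))

include hι hsh in
theorem conj_ι (k : ℕ) (b : BraidGroup (k + 2)) :
    gg k * ι k b * (gg k)⁻¹ = sh k (Dk k * b * (Dk k)⁻¹) := by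
  have hhom : (MulAut.conj (gg k)).toMonoidHom.comp (ι k)
      = (sh k).comp (MulAut.conj (Dk k)).toMonoidHom := by
    apply braidHom_ext
    intro j
    have hjk : (j : ℕ) ≤ k := by have := j.isLt; omega
    have hj2 : ((j : ℕ) : ℕ) + 1 ≤ k + 1 := by omega
    simp only [MonoidHom.comp_apply, MulEquiv.coe_toMonoidHom, MulAut.conj_apply]
    rw [← ss_of j, ι_ss ι hι k _ hjk, map_mul, map_mul, map_inv, sh_ss sh hsh k _ hjk]
    unfold Dk
    rw [sh_PP sh hsh k]
    exact gg_conj_ss k _ hjk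
  have := DFunLike.congr_fun hhom b
  simpa [MulAut.conj_apply] using this

end Level2


theorem ss_eq_bσ {n i : ℕ} (h : i < n - 1) : ss n i = bσ ⟨i, h⟩ := dif_pos h

theorem BB_ext {k : ℕ} {a b : BraidGroup (k + 2)} (h : a = b) :
    (⟨k, a⟩ : BB) = ⟨k, b⟩ := by rw [h]

section Moves

variable (ι sh : ∀ k : ℕ, BraidGroup (k + 2) →* BraidGroup (k + 3))
variable (hι : ∀ (k : ℕ) (j : Fin (k + 1)),
      ι k (bσ j) = bσ (Fin.castLE (Nat.le_of_lt_succ (by omega)) j : Fin (k + 3 - 1)))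
variable (hsh : ∀ (k : ℕ) (j : Fin (k + 1)),
      sh k (bσ j) = bσ (j.succ : Fin (k + 3 - 1)))

include hι hsh in
theorem move_pos (k : ℕ) (b : BraidGroup (k + 2)) :
    gg k * (ss (k + 3) (k + 1) * ι k b) * (gg k)⁻¹
      = ss (k + 3) 0 * sh k (Dk k * b * (Dk k)⁻¹) := by
  have A : gg k * ss (k + 3) (k + 1) * (gg k)⁻¹ = ss (k + 3) 0 := by
    rw [gg_s]; group
  have B := conj_ι ι sh hι hsh k b
  rw [← A, ← B]; group

include hι hsh in
theorem move_neg (k : ℕ) (b : BraidGroup (k + 2)) :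
    gg k * ((ss (k + 3) (k + 1))⁻¹ * ι k b) * (gg k)⁻¹
      = (ss (k + 3) 0)⁻¹ * sh k (Dk k * b * (Dk k)⁻¹) := by
  have A : gg k * ss (k + 3) (k + 1) * (gg k)⁻¹ = ss (k + 3) 0 := by
    rw [gg_s]; group
  have B := conj_ι ι sh hι hsh k b
  rw [← A, ← B]; group

include hι hsh in
theorem markov_to_mirror : ∀ x y, markovMove ι x y → Relation.EqvGen (mirrorMove sh) x y := by
  rintro ⟨k, b⟩ y h
  rcases h with ⟨a, rfl⟩ | rfl | rfl
  · exact .rel _ _ (Or.inl ⟨a, rfl⟩)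
  · have s1 : mirrorMove sh ⟨k, b⟩ ⟨k, Dk k * b * (Dk k)⁻¹⟩ := Or.inl ⟨Dk k, rfl⟩
    have s2 : mirrorMove sh ⟨k, Dk k * b * (Dk k)⁻¹⟩
        ⟨k + 1, ss (k + 3) 0 * sh k (Dk k * b * (Dk k)⁻¹)⟩ := Or.inr (Or.inl rfl)
    have s3 : mirrorMove sh ⟨k + 1, ss (k + 3) 0 * sh k (Dk k * b * (Dk k)⁻¹)⟩
        ⟨k + 1, ss (k + 3) (k + 1) * ι k b⟩ := by
      refine Or.inl ⟨(gg k)⁻¹, BB_ext ?_⟩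
      rw [← move_pos ι sh hι hsh k b]; group
    have hchain := Relation.EqvGen.trans _ _ _ (Relation.EqvGen.rel _ _ s1)
      (Relation.EqvGen.trans _ _ _ (Relation.EqvGen.rel _ _ s2) (Relation.EqvGen.rel _ _ s3))
    have hfin : (⟨k + 1, ss (k + 3) (k + 1) * ι k b⟩ : BB)
        = ⟨k + 1, bσ (⟨k + 1, by omega⟩ : Fin (k + 3 - 1)) * ι k b⟩ :=
      BB_ext (by rw [ss_eq_bσ])
    exact hfin ▸ hchain
  · have s1 : mirrorMove sh ⟨k, b⟩ ⟨k, Dk k * b * (Dk k)⁻¹⟩ := Or.inl ⟨Dk k, rfl⟩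
    have s2 : mirrorMove sh ⟨k, Dk k * b * (Dk k)⁻¹⟩
        ⟨k + 1, (ss (k + 3) 0)⁻¹ * sh k (Dk k * b * (Dk k)⁻¹)⟩ := Or.inr (Or.inr rfl)
    have s3 : mirrorMove sh ⟨k + 1, (ss (k + 3) 0)⁻¹ * sh k (Dk k * b * (Dk k)⁻¹)⟩
        ⟨k + 1, (ss (k + 3) (k + 1))⁻¹ * ι k b⟩ := by
      refine Or.inl ⟨(gg k)⁻¹, BB_ext ?_⟩
      rw [← move_neg ι sh hι hsh k b]; group
    have hchain := Relation.EqvGen.trans _ _ _ (Relation.EqvGen.rel _ _ s1)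
      (Relation.EqvGen.trans _ _ _ (Relation.EqvGen.rel _ _ s2) (Relation.EqvGen.rel _ _ s3))
    have hfin : (⟨k + 1, (ss (k + 3) (k + 1))⁻¹ * ι k b⟩ : BB)
        = ⟨k + 1, (bσ (⟨k + 1, by omega⟩ : Fin (k + 3 - 1)))⁻¹ * ι k b⟩ :=
      BB_ext (by rw [ss_eq_bσ])
    exact hfin ▸ hchain

include hι hsh in
theorem mirror_to_markov : ∀ x y, mirrorMove sh x y → Relation.EqvGen (markovMove ι) x y := by
  rintro ⟨k, b⟩ y h
  rcases h with ⟨a, rfl⟩ | rfl | rfl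
  · exact .rel _ _ (Or.inl ⟨a, rfl⟩)
  · have s1 : markovMove ι ⟨k, b⟩ ⟨k, (Dk k)⁻¹ * b * ((Dk k)⁻¹)⁻¹⟩ := Or.inl ⟨(Dk k)⁻¹, rfl⟩
    have s2 : markovMove ι ⟨k, (Dk k)⁻¹ * b * ((Dk k)⁻¹)⁻¹⟩
        ⟨k + 1, ss (k + 3) (k + 1) * ι k ((Dk k)⁻¹ * b * ((Dk k)⁻¹)⁻¹)⟩ :=
      Or.inr (Or.inl (BB_ext (by rw [ss_eq_bσ])))
    have s3 : markovMove ι ⟨k + 1, ss (k + 3) (k + 1) * ι k ((Dk k)⁻¹ * b * ((Dk k)⁻¹)⁻¹)⟩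
        ⟨k + 1, ss (k + 3) 0 * sh k b⟩ := by
      refine Or.inl ⟨gg k, BB_ext ?_⟩
      rw [move_pos ι sh hι hsh k ((Dk k)⁻¹ * b * ((Dk k)⁻¹)⁻¹),
        show Dk k * ((Dk k)⁻¹ * b * ((Dk k)⁻¹)⁻¹) * (Dk k)⁻¹ = b by group]
    exact Relation.EqvGen.trans _ _ _ (Relation.EqvGen.rel _ _ s1)
      (Relation.EqvGen.trans _ _ _ (Relation.EqvGen.rel _ _ s2) (Relation.EqvGen.rel _ _ s3))
  · have s1 : markovMove ι ⟨k, b⟩ ⟨k, (Dk k)⁻¹ * b * ((Dk k)⁻¹)⁻¹⟩ := Or.inl ⟨(Dk k)⁻¹, rfl⟩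
    have s2 : markovMove ι ⟨k, (Dk k)⁻¹ * b * ((Dk k)⁻¹)⁻¹⟩
        ⟨k + 1, (ss (k + 3) (k + 1))⁻¹ * ι k ((Dk k)⁻¹ * b * ((Dk k)⁻¹)⁻¹)⟩ :=
      Or.inr (Or.inr (BB_ext (by rw [ss_eq_bσ])))
    have s3 : markovMove ι ⟨k + 1, (ss (k + 3) (k + 1))⁻¹ * ι k ((Dk k)⁻¹ * b * ((Dk k)⁻¹)⁻¹)⟩
        ⟨k + 1, (ss (k + 3) 0)⁻¹ * sh k b⟩ := by
      refine Or.inl ⟨gg k, BB_ext ?_⟩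
      rw [move_neg ι sh hι hsh k ((Dk k)⁻¹ * b * ((Dk k)⁻¹)⁻¹),
        show Dk k * ((Dk k)⁻¹ * b * ((Dk k)⁻¹)⁻¹) * (Dk k)⁻¹ = b by group]
    exact Relation.EqvGen.trans _ _ _ (Relation.EqvGen.rel _ _ s1)
      (Relation.EqvGen.trans _ _ _ (Relation.EqvGen.rel _ _ s2) (Relation.EqvGen.rel _ _ s3))

end Moves

theorem eqvGen_le {α : Type*} {r s : α → α → Prop}
    (h : ∀ a b, r a b → Relation.EqvGen s a b) :
    ∀ a b, Relation.EqvGen r a b → Relation.EqvGen s a b := by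
  intro a b hab
  induction hab with
  | rel a b h' => exact h a b h'
  | refl a => exact .refl a
  | symm a b _ ih => exact .symm a b ih
  | trans a b c _ _ ih1 ih2 => exact .trans a b c ih1 ih2

end Aux

/-- The Markov equivalence `~` (generated by conjugation and right
stabilization) coincides with the equivalence `≅` (generated by conjugation
and left stabilization). -/
theorem markov_eq_mirror
    (ι sh : ∀ k : ℕ, BraidGroup (k + 2) →* BraidGroup (k + 3))
    (hι : ∀ (k : ℕ) (j : Fin (k + 1)),
      ι k (bσ j) = bσ (Fin.castLE (by omega) j : Fin (k + 3 - 1)))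
    (hsh : ∀ (k : ℕ) (j : Fin (k + 1)),
      sh k (bσ j) = bσ (j.succ : Fin (k + 3 - 1))) :
    Relation.EqvGen (markovMove ι) = Relation.EqvGen (mirrorMove sh) := by
  funext x y
  apply propext
  constructor
  · exact Aux.eqvGen_le (Aux.markov_to_mirror ι sh hι hsh) x y
  · exact Aux.eqvGen_le (Aux.mirror_to_markov ι sh hι hsh) x y
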